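/- Let B be an m×m real matrix with eigenvalues c_i + i·d_i. Then Σ_{i=1}^m c_i² ≤ (1/2)·tr(B·B + B·Bᵀ) and Σ_{i=1}^m d_i² ≤ (1/2)·tr(B·Bᵀ − B·B). -/

import Mathlib

open Matrix Polynomial

lemma schur_aux : ∀ (n : ℕ) (A : Matrix (Fin n) (Fin n) ℂ),
    ∃ U T : Matrix (Fin n) (Fin n) ℂ,
      Uᴴ * U = 1 ∧ U * Uᴴ = 1 ∧ A = U * T * Uᴴ ∧ T.BlockTriangular id := by
  intro n
  induction n with
  | zero =>
    intro A
    exact ⟨1, A, by simp, by simp, by simp, fun i j _ => i.elim0⟩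
  | succ n ih =>
    intro A
    obtain ⟨μ, hμ⟩ := Module.End.exists_eigenvalue (Matrix.mulVecLin A)
    obtain ⟨v, hv⟩ := hμ.exists_hasEigenvector
    have hv0 : v ≠ 0 := hv.right
    have hAv : A.mulVec v = μ • v := hv.apply_eq_smul
    -- move to EuclideanSpace
    let v' : EuclideanSpace ℂ (Fin (n+1)) := WithLp.toLp 2 v
    have hv0' : v' ≠ 0 := by
      intro h; apply hv0; simpa [v'] using congrArg WithLp.ofLp h
    have hnv : ‖v'‖ ≠ 0 := norm_ne_zero_iff.mpr hv0'
    set w : EuclideanSpace ℂ (Fin (n+1)) := (‖v'‖ : ℂ)⁻¹ • v' with hw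
    have hw1 : ‖w‖ = 1 := by
      rw [hw, norm_smul]
      field_simp
      rw [norm_div, norm_one, Complex.norm_real, norm_norm]
      field_simp
    have horth : Orthonormal ℂ (({0} : Set (Fin (n+1))).restrict (fun _ => w)) := by
      constructor
      · intro i
        exact hw1
      · intro i j hij
        exact absurd (Subsingleton.elim i j) hij
    obtain ⟨b, hb⟩ := horth.exists_orthonormalBasis_extension_of_card_eq
      (by simp [finrank_euclideanSpace])
    have hb0 : b 0 = w := hb 0 rfl
    set U : Matrix (Fin (n+1)) (Fin (n+1)) ℂ := Matrix.of fun i j => b j i with hU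
    have hUU : Uᴴ * U = 1 := by
      ext j k
      have h2 := orthonormal_iff_ite.mp b.orthonormal j k
      simp only [PiLp.inner_apply, RCLike.inner_apply] at h2
      simpa [Matrix.mul_apply, Matrix.conjTranspose_apply, hU, Matrix.one_apply, mul_comm] using h2
    have hUU' : U * Uᴴ = 1 := mul_eq_one_comm.mp hUU
    set M : Matrix (Fin (n+1)) (Fin (n+1)) ℂ := Uᴴ * A * U with hM
    have hAb0 : A.mulVec (b 0) = μ • (b 0) := by
      rw [hb0, hw]
      show A.mulVec ((‖v'‖ : ℂ)⁻¹ • v) = μ • ((‖v'‖ : ℂ)⁻¹ • v)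
      rw [Matrix.mulVec_smul, hAv, smul_comm]
    have hcol : ∀ i, M i 0 = if i = 0 then μ else 0 := by
      intro i
      have hAU : ∀ p, (A * U) p 0 = μ * b 0 p := by
        intro p
        have h1 : (A * U) p 0 = A.mulVec (b 0) p := by
          simp [Matrix.mul_apply, Matrix.mulVec, dotProduct, hU]
        rw [h1, hAb0]
        rfl
      have h2 := orthonormal_iff_ite.mp b.orthonormal i 0
      simp only [PiLp.inner_apply, RCLike.inner_apply] at h2
      have h3 : M i 0 = ∑ p, star (b i p) * (μ * b 0 p) := by
        rw [hM, Matrix.mul_assoc]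
        rw [Matrix.mul_apply]
        simp only [hAU]
        simp [Matrix.conjTranspose_apply, hU]
      rw [h3]
      have h4 : ∑ p, star (b i p) * (μ * b 0 p)
          = (∑ p, (starRingEnd ℂ) (b i p) * b 0 p) * μ := by
        rw [Finset.sum_mul]
        congr 1 with p
        rw [starRingEnd_apply]
        ring
      have h2' : ∑ p, (starRingEnd ℂ) (b i p) * b 0 p = if i = 0 then 1 else 0 := by
        rw [← h2]; exact Finset.sum_congr rfl fun p _ => mul_comm _ _
      rw [h4, h2']
      by_cases hi : i = 0 <;> simp [hi]
    set A' : Matrix (Fin n) (Fin n) ℂ := M.submatrix Fin.succ Fin.succ with hA'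
    obtain ⟨V, S, hV1, hV2, hVS, hS⟩ := ih A'
    set W : Matrix (Fin (n+1)) (Fin (n+1)) ℂ := Matrix.of fun i j =>
      Fin.cases (Fin.cases (1:ℂ) (fun _ => 0) j)
        (fun i' => Fin.cases 0 (fun j' => V i' j') j) i with hWdef
    have hW00 : W 0 0 = 1 := by simp [hWdef]
    have hW0s : ∀ j : Fin n, W 0 j.succ = 0 := by intro j; simp [hWdef]
    have hWs0 : ∀ i : Fin n, W i.succ 0 = 0 := by intro i; simp [hWdef]
    have hWss : ∀ i j : Fin n, W i.succ j.succ = V i j := by intro i j; simp [hWdef]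
    have hWW : Wᴴ * W = 1 := by
      ext j k
      rw [Matrix.mul_apply]
      simp only [Matrix.conjTranspose_apply]
      rcases Fin.eq_zero_or_eq_succ j with rfl | ⟨j', rfl⟩
      · rcases Fin.eq_zero_or_eq_succ k with rfl | ⟨k', rfl⟩
        · simp [Fin.sum_univ_succ, hW00, hWs0, Matrix.one_apply]
        · simp [Fin.sum_univ_succ, hW00, hW0s, hWs0, hWss, Matrix.one_apply,
            (Fin.succ_ne_zero k').symm]
      · rcases Fin.eq_zero_or_eq_succ k with rfl | ⟨k', rfl⟩
        · simp [Fin.sum_univ_succ, hW00, hW0s, hWs0, hWss, Matrix.one_apply,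
            Fin.succ_ne_zero j']
        · have h5 : (Vᴴ * V) j' k' = (1 : Matrix (Fin n) (Fin n) ℂ) j' k' := by rw [hV1]
          rw [Matrix.mul_apply] at h5
          simp only [Matrix.conjTranspose_apply] at h5
          simp only [Matrix.one_apply] at h5
          simp [Fin.sum_univ_succ, hW0s, hWss, Matrix.one_apply, Fin.succ_inj]
          simp only [starRingEnd_apply]
          exact h5
    have hWW' : W * Wᴴ = 1 := mul_eq_one_comm.mp hWW
    set N : Matrix (Fin (n+1)) (Fin (n+1)) ℂ := Wᴴ * M * W with hN
    have hMW0 : ∀ p, (M * W) p 0 = M p 0 := by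
      intro p
      rw [Matrix.mul_apply, Fin.sum_univ_succ]
      simp [hW00, hWs0]
    have hMWs : ∀ (p : Fin (n+1)) (j : Fin n), (M * W) p j.succ = ∑ q, M p q.succ * V q j := by
      intro p j
      rw [Matrix.mul_apply, Fin.sum_univ_succ]
      simp [hW0s, hWss]
    have hN0 : ∀ i : Fin n, N i.succ 0 = 0 := by
      intro i
      rw [hN, Matrix.mul_assoc, Matrix.mul_apply, Fin.sum_univ_succ]
      simp only [Matrix.conjTranspose_apply, hW0s, star_zero, zero_mul, zero_add, hWss, hMW0]
      simp [hcol, Fin.succ_ne_zero]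
    have hVAV : Vᴴ * A' * V = S := by
      have h7 : Vᴴ * (V * S * Vᴴ) * V = (Vᴴ * V) * S * (Vᴴ * V) := by
        simp only [Matrix.mul_assoc]
      rw [hVS, h7, hV1, Matrix.one_mul, Matrix.mul_one]
    have hNss : ∀ i j : Fin n, N i.succ j.succ = S i j := by
      intro i j
      have h6 : (Vᴴ * A' * V) i j = S i j := by rw [hVAV]
      rw [← h6, hN, Matrix.mul_assoc, Matrix.mul_apply, Fin.sum_univ_succ]
      simp only [Matrix.conjTranspose_apply, hW0s, star_zero, zero_mul, zero_add, hWss, hMWs]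
      rw [Matrix.mul_assoc, Matrix.mul_apply]
      refine Finset.sum_congr rfl fun p _ => ?_
      rw [Matrix.mul_apply]
      simp [hA']
    have hNt : N.BlockTriangular id := by
      intro i j hij
      rcases Fin.eq_zero_or_eq_succ i with rfl | ⟨i', rfl⟩
      · exact absurd hij (by simp)
      rcases Fin.eq_zero_or_eq_succ j with rfl | ⟨j', rfl⟩
      · exact hN0 i'
      · rw [hNss]
        exact hS (by simpa [Fin.succ_lt_succ_iff] using hij)
    have hPt : (U * W)ᴴ * (U * W) = 1 := by
      rw [Matrix.conjTranspose_mul, Matrix.mul_assoc, ← Matrix.mul_assoc Uᴴ U W, hUU,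
        Matrix.one_mul, hWW]
    have hPu : (U * W) * (U * W)ᴴ = 1 := mul_eq_one_comm.mp hPt
    have key : ∀ (P X : Matrix (Fin (n+1)) (Fin (n+1)) ℂ), P * Pᴴ = 1 →
        P * (Pᴴ * X * P) * Pᴴ = X := by
      intro P X hP
      calc P * (Pᴴ * X * P) * Pᴴ = (P * Pᴴ) * X * (P * Pᴴ) := by simp only [Matrix.mul_assoc]
        _ = X := by rw [hP, Matrix.one_mul, Matrix.mul_one]
    have hNdef : N = (U * W)ᴴ * A * (U * W) := by
      rw [hN, hM, Matrix.conjTranspose_mul]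
      simp only [Matrix.mul_assoc]
    exact ⟨U * W, N, hPt, hPu, by rw [hNdef, key _ _ hPu], hNt⟩

lemma charpoly_similar {n : ℕ} (U T : Matrix (Fin n) (Fin n) ℂ)
    (h1 : Uᴴ * U = 1) (h2 : U * Uᴴ = 1) :
    (U * T * Uᴴ).charpoly = T.charpoly := by
  have hc : charmatrix (U * T * Uᴴ) = U.map C * charmatrix T * Uᴴ.map C := by
    simp only [charmatrix, RingHom.mapMatrix_apply]
    rw [Matrix.mul_sub, Matrix.sub_mul]
    congr 1
    · rw [← (Matrix.scalar_commute (X : ℂ[X]) (fun r => Commute.all X r) (U.map C)).eq,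
        Matrix.mul_assoc, ← Matrix.map_mul, h2,
        Matrix.map_one _ (map_zero _) (map_one _), Matrix.mul_one]
    · rw [← Matrix.map_mul, ← Matrix.map_mul]
  rw [Matrix.charpoly, Matrix.charpoly, hc, Matrix.det_mul, Matrix.det_mul]
  have hd : (U.map C).det * (Uᴴ.map C).det = 1 := by
    rw [← Matrix.det_mul, ← Matrix.map_mul, h2,
      Matrix.map_one _ (map_zero _) (map_one _), Matrix.det_one]
  linear_combination (charmatrix T).det * hd

theorem stmt2 {m : ℕ} (B : Matrix (Fin m) (Fin m) ℝ) (c d : Fin m → ℝ)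
    (h : (B.map (Complex.ofReal)).charpoly.roots
        = Multiset.map (fun i => (c i : ℂ) + d i * Complex.I) Finset.univ.val) :
    ∑ i, (c i) ^ 2 ≤ (1 / 2) * ((B * B).trace + (B * Bᵀ).trace) ∧
    ∑ i, (d i) ^ 2 ≤ (1 / 2) * ((B * Bᵀ).trace - (B * B).trace) := by
  set A : Matrix (Fin m) (Fin m) ℂ := B.map (Complex.ofReal) with hA
  obtain ⟨U, T, h1, h2, h3, h4⟩ := schur_aux m A
  have hroots : A.charpoly.roots = Multiset.map (fun i => T i i) Finset.univ.val := by
    rw [h3, charpoly_similar U T h1 h2, Matrix.charpoly_of_upperTriangular T h4]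
    have e : (∏ i : Fin m, (X - C (T i i)))
        = ((Multiset.map (fun i => T i i) Finset.univ.val).map (fun a => X - C a)).prod := by
      rw [Multiset.map_map]
      rfl
    rw [e, roots_multiset_prod_X_sub_C]
  have hmul : Multiset.map (fun i => (c i : ℂ) + d i * Complex.I) Finset.univ.val
      = Multiset.map (fun i => T i i) Finset.univ.val := by rw [← h, hroots]
  have hsum : ∀ {α : Type} [AddCommMonoid α] (f : ℂ → α),
      ∑ i, f ((c i : ℂ) + d i * Complex.I) = ∑ i, f (T i i) := by
    intro α _ f
    have e := congrArg (fun s => (Multiset.map f s).sum) hmul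
    simpa [Multiset.map_map, Function.comp_def, Finset.sum] using e
  -- A facts
  have hmapmul : ∀ (P Q : Matrix (Fin m) (Fin m) ℝ),
      P.map Complex.ofReal * Q.map Complex.ofReal = (P * Q).map Complex.ofReal := by
    intro P Q
    ext i j
    simp only [Matrix.map_apply, Matrix.mul_apply]
    push_cast
    rfl
  have hAmapsq : A * A = (B * B).map Complex.ofReal := by
    rw [hA, hmapmul]
  have hAH : Aᴴ = Bᵀ.map Complex.ofReal := by
    ext i j
    simp [hA, Matrix.conjTranspose_apply, Complex.conj_ofReal]
  have hAAH : A * Aᴴ = (B * Bᵀ).map Complex.ofReal := by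
    rw [hAH, hA, hmapmul]
  have htrmap : ∀ (M : Matrix (Fin m) (Fin m) ℝ),
      (M.map Complex.ofReal).trace = ((M.trace : ℝ) : ℂ) := by
    intro M
    rw [Matrix.trace, Matrix.trace]
    push_cast
    exact Finset.sum_congr rfl fun i _ => rfl
  -- trace A^2
  have hAA : (A * A).trace = (T * T).trace := by
    rw [h3]
    have e1 : (U * T * Uᴴ) * (U * T * Uᴴ) = U * (T * (Uᴴ * (U * (T * Uᴴ)))) := by
      simp only [Matrix.mul_assoc]
    rw [e1, ← Matrix.mul_assoc Uᴴ U, h1, Matrix.one_mul, Matrix.trace_mul_comm]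
    have e2 : (T * (T * Uᴴ)) * U = T * T * (Uᴴ * U) := by simp only [Matrix.mul_assoc]
    rw [e2, h1, Matrix.mul_one]
  have hTT : (T * T).trace = ∑ i, (T i i) ^ 2 := by
    rw [Matrix.trace]
    refine Finset.sum_congr rfl fun i _ => ?_
    rw [Matrix.diag_apply, Matrix.mul_apply, sq]
    rw [Finset.sum_eq_single i]
    · intro k _ hk
      rcases lt_or_gt_of_ne hk with hlt | hlt
      · rw [h4 hlt, zero_mul]
      · rw [h4 hlt, mul_zero]
    · intro hi
      exact absurd (Finset.mem_univ i) hi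
  have hAAH2 : (A * Aᴴ).trace = (T * Tᴴ).trace := by
    rw [h3]
    have e0 : (U * T * Uᴴ)ᴴ = U * Tᴴ * Uᴴ := by
      simp [Matrix.conjTranspose_mul, Matrix.mul_assoc]
    rw [e0]
    have e1 : (U * T * Uᴴ) * (U * Tᴴ * Uᴴ) = U * (T * (Uᴴ * (U * (Tᴴ * Uᴴ)))) := by
      simp only [Matrix.mul_assoc]
    rw [e1, ← Matrix.mul_assoc Uᴴ U, h1, Matrix.one_mul, Matrix.trace_mul_comm]
    have e2 : (T * (Tᴴ * Uᴴ)) * U = T * Tᴴ * (Uᴴ * U) := by simp only [Matrix.mul_assoc]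
    rw [e2, h1, Matrix.mul_one]
  have hTTH : (T * Tᴴ).trace = ((∑ i, ∑ k, Complex.normSq (T i k) : ℝ) : ℂ) := by
    rw [Matrix.trace]
    push_cast
    refine Finset.sum_congr rfl fun i _ => ?_
    rw [Matrix.diag_apply, Matrix.mul_apply]
    refine Finset.sum_congr rfl fun k _ => ?_
    rw [Matrix.conjTranspose_apply]
    exact Complex.mul_conj _
  -- the two real identities
  have hre : ∑ i, (c i ^ 2 - d i ^ 2) = (B * B).trace := by
    have e1 : ∑ i, ((c i : ℂ) + d i * Complex.I) ^ 2 = ((B * B).trace : ℂ) := by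
      rw [hsum (fun z => z ^ 2), ← hTT, ← hAA, hAmapsq, htrmap]
    have e2 := congrArg Complex.re e1
    rw [Complex.re_sum, Complex.ofReal_re] at e2
    rw [← e2]
    refine Finset.sum_congr rfl fun i _ => ?_
    simp [sq, Complex.add_re, Complex.add_im, Complex.mul_re, Complex.mul_im]
  have hineq : ∑ i, (c i ^ 2 + d i ^ 2) ≤ (B * Bᵀ).trace := by
    have e1 : ∑ i, Complex.normSq ((c i : ℂ) + d i * Complex.I)
        = ∑ i, Complex.normSq (T i i) := hsum (fun z => Complex.normSq z)
    have e2 : ((∑ i, ∑ k, Complex.normSq (T i k) : ℝ) : ℂ) = (((B * Bᵀ).trace : ℝ) : ℂ) := by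
      rw [← hTTH, ← hAAH2, hAAH, htrmap]
    have e3 : ∑ i, ∑ k, Complex.normSq (T i k) = (B * Bᵀ).trace :=
      Complex.ofReal_injective e2
    have e4 : ∑ i, Complex.normSq (T i i) ≤ ∑ i, ∑ k, Complex.normSq (T i k) := by
      refine Finset.sum_le_sum fun i _ => ?_
      exact Finset.single_le_sum (fun k _ => Complex.normSq_nonneg _) (Finset.mem_univ i)
    have e5 : ∀ i, Complex.normSq ((c i : ℂ) + d i * Complex.I) = c i ^ 2 + d i ^ 2 := by
      intro i
      rw [Complex.normSq_add_mul_I]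
    calc ∑ i, (c i ^ 2 + d i ^ 2) = ∑ i, Complex.normSq ((c i : ℂ) + d i * Complex.I) := by
          refine Finset.sum_congr rfl fun i _ => (e5 i).symm
      _ = ∑ i, Complex.normSq (T i i) := e1
      _ ≤ ∑ i, ∑ k, Complex.normSq (T i k) := e4
      _ = (B * Bᵀ).trace := e3
  have hs1 : ∑ i, (c i ^ 2 - d i ^ 2) = ∑ i, c i ^ 2 - ∑ i, d i ^ 2 :=
    Finset.sum_sub_distrib _ _
  have hs2 : ∑ i, (c i ^ 2 + d i ^ 2) = ∑ i, c i ^ 2 + ∑ i, d i ^ 2 :=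
    Finset.sum_add_distrib
  constructor <;> linarith
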